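/- Suppose π is a d^p probability tensor generated by a weakly hierarchical log-linear model θ. For a permutation σ of V = {1,…,p} and each j = 1,…,p−1, let G_σ^{(j)} = {σ(j+1),…,σ(p)} and define B_{σ(j)} = { i ∈ I_{σ(j)} : there exists f ∈ G_σ^{(j)} and i_f ∈ I_f such that θ_{{σ(j),f}}(i, i_f) ≠ 0 }. Then rnk⁺_P(π) ≤ min over all permutations σ of ∏_{j=1}^{p−1} ( |B_{σ(j)}| + 1 ). -/

import Mathlib

/-- A nonnegative PARAFAC decomposition with `m` terms. -/
def IsParafacDecomp {p : ℕ} {d : Fin p → ℕ}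
    (M : ((j : Fin p) → Fin (d j)) → ℝ) (m : ℕ) : Prop :=
  ∃ lam : Fin m → (j : Fin p) → Fin (d j) → ℝ,
    (∀ h j c, 0 ≤ lam h j c) ∧
    ∀ i : (j : Fin p) → Fin (d j), M i = ∑ h : Fin m, ∏ j : Fin p, lam h j (i j)

/-- The nonnegative PARAFAC rank. -/
noncomputable def parafacRank {p : ℕ} {d : Fin p → ℕ}
    (M : ((j : Fin p) → Fin (d j)) → ℝ) : ℕ :=
  sInf {m | IsParafacDecomp M m}

/-- The probability tensor of the log-linear model `θ`:
`π i = exp (∑_{E ⊆ V} θ_E(i_E))`, normalized so that the entries sum to one. -/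
noncomputable def loglinTensor {p : ℕ} {d : Fin p → ℕ}
    (θ : Finset (Fin p) → ((j : Fin p) → Fin (d j)) → ℝ) :
    ((j : Fin p) → Fin (d j)) → ℝ :=
  fun i => Real.exp (∑ E : Finset (Fin p), θ E i) /
    ∑ i' : (j : Fin p) → Fin (d j), Real.exp (∑ E : Finset (Fin p), θ E i')

namespace ParafacAux

variable {p d : ℕ}

def Bset (θ : Finset (Fin p) → (Fin p → Fin d) → ℝ) (σ : Equiv.Perm (Fin p)) (j : Fin p) :
    Set (Fin d) :=
  {c : Fin d | ∃ k : Fin p, j < k ∧ ∃ x : Fin p → Fin d, x (σ j) = c ∧ θ {σ j, σ k} x ≠ 0}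

open Classical in
noncomputable def classify (θ : Finset (Fin p) → (Fin p → Fin d) → ℝ) (σ : Equiv.Perm (Fin p))
    (j : Fin p) (c : Fin d) : Option ↥(Bset θ σ j) :=
  if h : c ∈ Bset θ σ j then some ⟨c, h⟩ else none

lemma classify_not_mem {θ : Finset (Fin p) → (Fin p → Fin d) → ℝ} {σ : Equiv.Perm (Fin p)}
    {j : Fin p} {c c' : Fin d}
    (h : classify θ σ j c = classify θ σ j c') (hne : c ≠ c') :
    c ∉ Bset θ σ j ∧ c' ∉ Bset θ σ j := by
  by_cases h1 : c ∈ Bset θ σ j <;> by_cases h2 : c' ∈ Bset θ σ j <;>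
    simp_all [classify]

lemma keyE (θ : Finset (Fin p) → (Fin p → Fin d) → ℝ) (σ : Equiv.Perm (Fin p))
    (hdep : ∀ (E : Finset (Fin p)) (i i' : Fin p → Fin d),
      (∀ j ∈ E, i j = i' j) → θ E i = θ E i')
    (hwh : ∀ (E F : Finset (Fin p)) (i i' : Fin p → Fin d),
      E ⊆ F → θ E i = 0 → (∀ j ∈ E, i' j = i j) → θ F i' = 0)
    (E : Finset (Fin p)) (i r : Fin p → Fin d)
    (hclass : ∀ j : Fin p, (j : ℕ) < p - 1 →
      classify θ σ j (i (σ j)) = classify θ σ j (r (σ j))) :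
    θ E i = θ E r + ∑ v : Fin p, (θ E (Function.update r v (i v)) - θ E r) := by
  classical
  have hext : ∀ v ∉ E, θ E (Function.update r v (i v)) = θ E r := by
    intro v hv
    exact hdep E _ r (fun w hw => Function.update_of_ne (fun h : w = v => hv (h ▸ hw)) _ r)
  have hsum : ∑ v : Fin p, (θ E (Function.update r v (i v)) - θ E r)
      = ∑ v ∈ E, (θ E (Function.update r v (i v)) - θ E r) := by
    refine (Finset.sum_subset (Finset.subset_univ E) (fun v _ hv => ?_)).symm
    rw [hext v hv, sub_self]
  rw [hsum]
  rcases E.eq_empty_or_nonempty with rfl | hne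
  · simp [hdep ∅ i r (fun j hj => absurd hj (Finset.notMem_empty j))]
  · set J : Finset (Fin p) := E.image σ.symm with hJdef
    have hJ : J.Nonempty := hne.image _
    set j1 : Fin p := J.max' hJ with hj1def
    have hj1J : j1 ∈ J := J.max'_mem hJ
    obtain ⟨v1, hv1E, hv1⟩ := Finset.mem_image.mp hj1J
    have hσj1 : σ j1 = v1 := by rw [← hv1, Equiv.apply_symm_apply]
    have hmax : ∀ v ∈ E, v ≠ v1 → σ.symm v < j1 := by
      intro v hv hvne
      refine lt_of_le_of_ne (J.le_max' _ (Finset.mem_image_of_mem _ hv)) (fun h => hvne ?_)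
      have := congrArg σ h
      rw [Equiv.apply_symm_apply, hσj1] at this
      exact this
    by_cases hb : ∀ v ∈ E, v ≠ v1 → i v = r v
    · rw [Finset.sum_eq_single_of_mem v1 hv1E (fun v hv hvne => by
        rw [hb v hv hvne, Function.update_eq_self, sub_self])]
      have h1 : θ E (Function.update r v1 (i v1)) = θ E i := by
        refine hdep E _ i (fun w hw => ?_)
        by_cases hwv : w = v1
        · subst hwv; rw [Function.update_self]
        · rw [Function.update_of_ne hwv, hb w hw hwv]
      rw [h1]; ring
    · push_neg at hb
      obtain ⟨v, hvE, hvne, hir⟩ := hb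
      set j : Fin p := σ.symm v with hjdef
      have hσj : σ j = v := Equiv.apply_symm_apply σ v
      have hjlt : j < j1 := hmax v hvE hvne
      have hjp : (j : ℕ) < p - 1 :=
        lt_of_lt_of_le hjlt (Nat.le_pred_of_lt j1.isLt)
      have hcl := hclass j hjp
      rw [hσj] at hcl
      obtain ⟨hiB, hrB⟩ := classify_not_mem hcl hir
      have hvan : ∀ x : Fin p → Fin d, x v ∉ Bset θ σ j → θ E x = 0 := by
        intro x hx
        have hpair : θ {σ j, σ j1} x = 0 := by
          by_contra hc
          exact hx ⟨j1, hjlt, x, by rw [hσj], hc⟩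
        refine hwh {σ j, σ j1} E x x ?_ hpair (fun _ _ => rfl)
        rw [hσj, hσj1]
        exact Finset.insert_subset hvE (Finset.singleton_subset_iff.mpr hv1E)
      rw [hvan i hiB, hvan r hrB]
      rw [Finset.sum_eq_zero (fun w hw => ?_)]
      · ring
      · rw [sub_zero]
        refine hvan _ ?_
        by_cases hwv : w = v
        · subst hwv; rw [Function.update_self]; exact hiB
        · rw [Function.update_of_ne (fun h : v = w => hwv h.symm) _ r]
          exact hrB


noncomputable def Ffun (θ : Finset (Fin p) → (Fin p → Fin d) → ℝ) (i : Fin p → Fin d) : ℝ :=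
  Real.exp (∑ E : Finset (Fin p), θ E i)

lemma Ffun_pos (θ : Finset (Fin p) → (Fin p → Fin d) → ℝ) (i : Fin p → Fin d) :
    0 < Ffun θ i := Real.exp_pos _

lemma prod_ratio (θ : Finset (Fin p) → (Fin p → Fin d) → ℝ) (σ : Equiv.Perm (Fin p))
    (hdep : ∀ (E : Finset (Fin p)) (i i' : Fin p → Fin d),
      (∀ j ∈ E, i j = i' j) → θ E i = θ E i')
    (hwh : ∀ (E F : Finset (Fin p)) (i i' : Fin p → Fin d),
      E ⊆ F → θ E i = 0 → (∀ j ∈ E, i' j = i j) → θ F i' = 0)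
    (i r : Fin p → Fin d)
    (hclass : ∀ j : Fin p, (j : ℕ) < p - 1 →
      classify θ σ j (i (σ j)) = classify θ σ j (r (σ j))) :
    ∏ v : Fin p, (Ffun θ (Function.update r v (i v)) / Ffun θ r) = Ffun θ i / Ffun θ r := by
  have hkey : ∑ E : Finset (Fin p), θ E i = ∑ E : Finset (Fin p), θ E r +
      ∑ v : Fin p, ((∑ E : Finset (Fin p), θ E (Function.update r v (i v))) -
        ∑ E : Finset (Fin p), θ E r) := by
    have h1 : ∀ E : Finset (Fin p), θ E i
        = θ E r + ∑ v : Fin p, (θ E (Function.update r v (i v)) - θ E r) :=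
      fun E => keyE θ σ hdep hwh E i r hclass
    calc ∑ E : Finset (Fin p), θ E i
        = ∑ E : Finset (Fin p), (θ E r + ∑ v : Fin p,
            (θ E (Function.update r v (i v)) - θ E r)) :=
          Finset.sum_congr rfl (fun E _ => h1 E)
      _ = ∑ E : Finset (Fin p), θ E r + ∑ E : Finset (Fin p), ∑ v : Fin p,
            (θ E (Function.update r v (i v)) - θ E r) := Finset.sum_add_distrib
      _ = ∑ E : Finset (Fin p), θ E r + ∑ v : Fin p, ∑ E : Finset (Fin p),
            (θ E (Function.update r v (i v)) - θ E r) := by rw [Finset.sum_comm]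
      _ = _ := by
          congr 1
          exact Finset.sum_congr rfl (fun v _ => Finset.sum_sub_distrib _ _)
  unfold Ffun
  simp only [← Real.exp_sub, ← Real.exp_sum]
  congr 1
  rw [hkey]; ring


noncomputable def loglinTensor' (θ : Finset (Fin p) → (Fin p → Fin d) → ℝ) :
    (Fin p → Fin d) → ℝ :=
  fun i => Real.exp (∑ E : Finset (Fin p), θ E i) /
    ∑ i' : Fin p → Fin d, Real.exp (∑ E : Finset (Fin p), θ E i')

open Classical in
noncomputable def lamAux (θ : Finset (Fin p) → (Fin p → Fin d) → ℝ) (σ : Equiv.Perm (Fin p))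
    (hp : 0 < p) (b : ∀ j : {j : Fin p // (j : ℕ) < p - 1}, Option ↥(Bset θ σ j.1))
    (v : Fin p) (c : Fin d) : ℝ :=
  (if ∀ h : ((σ.symm v : Fin p) : ℕ) < p - 1,
      classify θ σ (σ.symm v) c = b ⟨σ.symm v, h⟩ then 1 else 0) *
  (if hb : ∃ i0 : Fin p → Fin d, ∀ j : {j : Fin p // (j : ℕ) < p - 1},
      classify θ σ j.1 (i0 (σ j.1)) = b j then
    (if v = σ ⟨0, hp⟩ then
        (∑ i' : Fin p → Fin d, Real.exp (∑ E : Finset (Fin p), θ E i'))⁻¹ * Ffun θ hb.choose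
      else 1) *
      (Ffun θ (Function.update hb.choose v c) / Ffun θ hb.choose)
   else 0)

lemma lamAux_nonneg (θ : Finset (Fin p) → (Fin p → Fin d) → ℝ) (σ : Equiv.Perm (Fin p))
    (hp : 0 < p) (b : ∀ j : {j : Fin p // (j : ℕ) < p - 1}, Option ↥(Bset θ σ j.1))
    (v : Fin p) (c : Fin d) : 0 ≤ lamAux θ σ hp b v c := by
  unfold lamAux
  refine mul_nonneg (by positivity) ?_
  split_ifs with hb h
  · refine mul_nonneg (mul_nonneg ?_ (Ffun_pos θ _).le) ?_
    · refine inv_nonneg.mpr (Finset.sum_nonneg fun _ _ => (Real.exp_pos _).le)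
    · exact div_nonneg (Ffun_pos θ _).le (Ffun_pos θ _).le
  · exact mul_nonneg zero_le_one (div_nonneg (Ffun_pos θ _).le (Ffun_pos θ _).le)
  · exact le_refl 0
  
open Classical in
lemma sum_lamAux (θ : Finset (Fin p) → (Fin p → Fin d) → ℝ) (σ : Equiv.Perm (Fin p))
    (hp : 0 < p) (hd : 0 < d)
    (hdep : ∀ (E : Finset (Fin p)) (i i' : Fin p → Fin d),
      (∀ j ∈ E, i j = i' j) → θ E i = θ E i')
    (hwh : ∀ (E F : Finset (Fin p)) (i i' : Fin p → Fin d),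
      E ⊆ F → θ E i = 0 → (∀ j ∈ E, i' j = i j) → θ F i' = 0)
    (i : Fin p → Fin d) :
    ∑ b : (∀ j : {j : Fin p // (j : ℕ) < p - 1}, Option ↥(Bset θ σ j.1)),
      ∏ v : Fin p, lamAux θ σ hp b v (i v) = loglinTensor' θ i := by
  classical
  have hne : Nonempty (Fin p → Fin d) := ⟨fun _ => ⟨0, hd⟩⟩
  have hZ : 0 < ∑ i' : Fin p → Fin d, Real.exp (∑ E : Finset (Fin p), θ E i') :=
    Finset.sum_pos (fun _ _ => Real.exp_pos _) Finset.univ_nonempty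
  set b0 : ∀ j : {j : Fin p // (j : ℕ) < p - 1}, Option ↥(Bset θ σ j.1) :=
    fun j => classify θ σ j.1 (i (σ j.1)) with hb0def
  rw [Fintype.sum_eq_single b0 ?_]
  · have hb : ∃ i0 : Fin p → Fin d, ∀ j : {j : Fin p // (j : ℕ) < p - 1},
        classify θ σ j.1 (i0 (σ j.1)) = b0 j := ⟨i, fun j => rfl⟩
    have hrs := hb.choose_spec
    set r := hb.choose with hrdef
    have hclass : ∀ j : Fin p, (j : ℕ) < p - 1 →
        classify θ σ j (i (σ j)) = classify θ σ j (r (σ j)) :=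
      fun j hj => (hrs ⟨j, hj⟩).symm
    have hfac : ∀ v : Fin p, lamAux θ σ hp b0 v (i v) =
        (if v = σ ⟨0, hp⟩ then
          (∑ i' : Fin p → Fin d, Real.exp (∑ E : Finset (Fin p), θ E i'))⁻¹ * Ffun θ r
         else 1) * (Ffun θ (Function.update r v (i v)) / Ffun θ r) := by
      intro v
      unfold lamAux
      rw [dif_pos hb, if_pos ?_, one_mul]
      intro h
      show classify θ σ (σ.symm v) (i v) = classify θ σ (σ.symm v) (i (σ (σ.symm v)))
      rw [Equiv.apply_symm_apply]
    rw [Finset.prod_congr rfl (fun v _ => hfac v), Finset.prod_mul_distrib,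
      prod_ratio θ σ hdep hwh i r hclass]
    simp only [Finset.prod_ite_eq', Finset.mem_univ, if_true]
    unfold loglinTensor'
    rw [show Real.exp (∑ E : Finset (Fin p), θ E i) = Ffun θ i from rfl]
    field_simp [ne_of_gt (Ffun_pos θ r), ne_of_gt hZ]
  · intro b hbne
    have hex : ∃ j, b j ≠ b0 j := by
      by_contra h; push_neg at h; exact hbne (funext h)
    obtain ⟨j, hj⟩ := hex
    apply Finset.prod_eq_zero (Finset.mem_univ (σ j.1))
    unfold lamAux
    rw [if_neg ?_, zero_mul]
    intro hall
    rw [Equiv.symm_apply_apply] at hall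
    exact hj ((hall j.2).symm)


open Classical in
lemma card_T (θ : Finset (Fin p) → (Fin p → Fin d) → ℝ) (σ : Equiv.Perm (Fin p)) :
    Fintype.card (∀ j : {j : Fin p // (j : ℕ) < p - 1}, Option ↥(Bset θ σ j.1))
      = ∏ j ∈ Finset.univ.filter (fun j : Fin p => (j : ℕ) < p - 1),
          ((Bset θ σ j).ncard + 1) := by
  classical
  rw [Fintype.card_pi]
  rw [Finset.prod_subtype (p := fun j : Fin p => (j : ℕ) < p - 1)
    (Finset.univ.filter (fun j : Fin p => (j : ℕ) < p - 1))
    (fun j => by simp) (fun j => (Bset θ σ j).ncard + 1)]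
  refine Finset.prod_congr rfl (fun j _ => ?_)
  rw [Fintype.card_option]
  congr 1
  rw [Set.ncard_eq_toFinset_card', Set.toFinset_card]

end ParafacAux


/-- Theorem 1: if `π` is the `d^p` probability tensor of a weakly hierarchical log-linear
model `θ`, then for every permutation `σ` of the variables, the nonnegative PARAFAC rank
of `π` is at most `∏_{j=1}^{p-1} (|B_{σ(j)}| + 1)`, where `B_{σ(j)}` is the set of levels
of variable `σ(j)` sharing a nonzero two-way interaction with some variable appearing
later in the order `σ`.  (Hence the rank is at most the minimum of this bound over σ.) -/
theorem parafacRank_le_weaklyHierarchical_bound {p d : ℕ}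
    (θ : Finset (Fin p) → (Fin p → Fin d) → ℝ)
    (hdep : ∀ (E : Finset (Fin p)) (i i' : Fin p → Fin d),
      (∀ j ∈ E, i j = i' j) → θ E i = θ E i')
    (hwh : ∀ (E F : Finset (Fin p)) (i i' : Fin p → Fin d),
      E ⊆ F → θ E i = 0 → (∀ j ∈ E, i' j = i j) → θ F i' = 0)
    (σ : Equiv.Perm (Fin p)) :
    parafacRank (d := fun _ => d) (loglinTensor (d := fun _ => d) θ) ≤
      ∏ j ∈ Finset.univ.filter (fun j : Fin p => (j : ℕ) < p - 1),
        (({c : Fin d | ∃ k : Fin p, j < k ∧ ∃ x : Fin p → Fin d,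
            x (σ j) = c ∧ θ {σ j, σ k} x ≠ 0}).ncard + 1) := by
  classical
  by_cases hp : p = 0
  · subst hp
    have h1 : IsParafacDecomp (d := fun _ => d) (loglinTensor (d := fun _ => d) θ) 1 := by
      refine ⟨fun _ _ _ => 1, fun _ _ _ => zero_le_one, fun i => ?_⟩
      have hu : (Finset.univ : Finset (Fin 0 → Fin d)) = {i} :=
        Finset.eq_singleton_iff_unique_mem.mpr
          ⟨Finset.mem_univ i, fun x _ => Subsingleton.elim x i⟩
      simp only [loglinTensor, hu, Finset.sum_singleton]
      rw [show i = (default : Fin 0 → Fin d) from Subsingleton.elim i default,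
        div_self (Real.exp_ne_zero _)]
      simp
    refine le_trans (Nat.sInf_le h1) ?_
    simp
  · by_cases hd : d = 0
    · subst hd
      have h0 : IsParafacDecomp (d := fun _ => (0 : ℕ)) (loglinTensor (d := fun _ => 0) θ) 0 :=
        ⟨fun _ _ _ => 0, fun _ _ _ => le_refl 0,
          fun i => (i ⟨0, Nat.pos_of_ne_zero hp⟩).elim0⟩
      exact le_trans (Nat.sInf_le h0) (Nat.zero_le _)
    · have hp1 : 0 < p := Nat.pos_of_ne_zero hp
      have hd1 : 0 < d := Nat.pos_of_ne_zero hd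
      have hcard := ParafacAux.card_T θ σ
      let e := Fintype.equivFinOfCardEq hcard
      have hdec : IsParafacDecomp (d := fun _ => d) (loglinTensor (d := fun _ => d) θ)
          (∏ j ∈ Finset.univ.filter (fun j : Fin p => (j : ℕ) < p - 1),
            ((ParafacAux.Bset θ σ j).ncard + 1)) := by
        refine ⟨fun h v c => ParafacAux.lamAux θ σ hp1 (e.symm h) v c,
          fun h v c => ParafacAux.lamAux_nonneg θ σ hp1 _ v c, fun i => ?_⟩
        have hs := ParafacAux.sum_lamAux θ σ hp1 hd1 hdep hwh i
        have he := Equiv.sum_comp e.symm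
          (fun b => ∏ v : Fin p, ParafacAux.lamAux θ σ hp1 b v (i v))
        rw [show loglinTensor (d := fun _ => d) θ i = ParafacAux.loglinTensor' θ i from rfl,
          ← hs]
        exact he.symm
      exact Nat.sInf_le hdec
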